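/- For all natural numbers a, b, N with N ≤ a and N ≤ b, the polynomial Q(t) = Σ_{j=0}^N C(a, N-j) C(b, j) t^j has all roots real. -/

import Mathlib

open Polynomial


private lemma deriv_term (c m n : ℕ) :
    derivative (C (c:ℝ) * X^m * (X+1)^n) =
      C ((c*m : ℕ):ℝ) * X^(m-1) * (X+1)^n + C ((c*n : ℕ):ℝ) * X^m * (X+1)^(n-1) := by
  simp only [derivative_mul, derivative_C, derivative_X_pow, derivative_pow, derivative_add,
    derivative_X, derivative_one, add_zero, mul_one, zero_mul, zero_add]
  push_cast
  simp only [map_mul]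
  ring

private lemma key_identity (a b : ℕ) :
    ∀ N, N ≤ a → N ≤ b →
      derivative^[N] ((X:ℝ[X])^b * (X+1)^a) =
        ∑ j ∈ Finset.range (N+1),
          C ((N.factorial * a.choose (N-j) * b.choose j : ℕ) : ℝ) * X^(b-j) * (X+1)^(a-(N-j)) := by
  intro N
  induction N with
  | zero => intro _ _; simp
  | succ N ih =>
    intro ha hb
    rw [Function.iterate_succ_apply', ih (by omega) (by omega), derivative_sum]
    have hder : ∀ j ∈ Finset.range (N+1),
        derivative (C ((N.factorial * a.choose (N-j) * b.choose j : ℕ) : ℝ)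
            * X^(b-j) * (X+1)^(a-(N-j))) =
          (C ((N.factorial * a.choose (N-j) * b.choose j * (b-j) : ℕ) : ℝ)
            * X^(b-j-1) * (X+1)^(a-(N-j)) +
           C ((N.factorial * a.choose (N-j) * b.choose j * (a-(N-j)) : ℕ) : ℝ)
            * X^(b-j) * (X+1)^(a-(N-j)-1)) := by
      intro j hj
      exact deriv_term _ _ _
    rw [Finset.sum_congr rfl hder, Finset.sum_add_distrib]
    rw [Finset.sum_range_succ (fun j => C ((N.factorial * a.choose (N-j) * b.choose j * (b-j) : ℕ) : ℝ)
            * X^(b-j-1) * (X+1)^(a-(N-j))) N]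
    rw [Finset.sum_range_succ' (fun j => C ((N.factorial * a.choose (N-j) * b.choose j * (a-(N-j)) : ℕ) : ℝ)
            * X^(b-j) * (X+1)^(a-(N-j)-1)) N]
    rw [Finset.sum_range_succ' (fun j => C (((N+1).factorial * a.choose (N+1-j) * b.choose j : ℕ) : ℝ)
            * X^(b-j) * (X+1)^(a-(N+1-j))) (N+1)]
    rw [Finset.sum_range_succ (fun j => C (((N+1).factorial * a.choose (N+1-(j+1)) * b.choose (j+1) : ℕ) : ℝ)
            * X^(b-(j+1)) * (X+1)^(a-(N+1-(j+1)))) N]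
    have hT0 : (C (((N+1).factorial * a.choose (N+1-0) * b.choose 0 : ℕ) : ℝ)
          * X^(b-0) * (X+1)^(a-(N+1-0)) : ℝ[X]) =
        C ((N.factorial * a.choose (N-0) * b.choose 0 * (a-(N-0)) : ℕ) : ℝ)
          * X^(b-0) * (X+1)^(a-(N-0)-1) := by
      have h1 : (N+1).factorial * a.choose (N+1) * b.choose 0
          = N.factorial * a.choose N * b.choose 0 * (a - N) := by
        have h := Nat.choose_succ_right_eq a N
        rw [Nat.factorial_succ]
        calc (N+1) * N.factorial * a.choose (N+1) * b.choose 0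
            = N.factorial * (a.choose (N+1) * (N+1)) * b.choose 0 := by ring
          _ = N.factorial * (a.choose N * (a - N)) * b.choose 0 := by rw [h]
          _ = N.factorial * a.choose N * b.choose 0 * (a - N) := by ring
      have e : a - (N+1-0) = a - (N-0) - 1 := by omega
      rw [e]
      simp only [Nat.sub_zero]
      rw [h1]
    have hTN : (C (((N+1).factorial * a.choose (N+1-(N+1)) * b.choose (N+1) : ℕ) : ℝ)
          * X^(b-(N+1)) * (X+1)^(a-(N+1-(N+1))) : ℝ[X]) =
        C ((N.factorial * a.choose (N-N) * b.choose N * (b-N) : ℕ) : ℝ)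
          * X^(b-N-1) * (X+1)^(a-(N-N)) := by
      have h1 : (N+1).factorial * a.choose 0 * b.choose (N+1)
          = N.factorial * a.choose 0 * b.choose N * (b - N) := by
        have h := Nat.choose_succ_right_eq b N
        rw [Nat.factorial_succ]
        calc (N+1) * N.factorial * a.choose 0 * b.choose (N+1)
            = N.factorial * a.choose 0 * (b.choose (N+1) * (N+1)) := by ring
          _ = N.factorial * a.choose 0 * (b.choose N * (b - N)) := by rw [h]
          _ = N.factorial * a.choose 0 * b.choose N * (b - N) := by ring
      have e : b - (N+1) = b - N - 1 := by omega
      have e2 : N+1-(N+1) = 0 := by omega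
      have e3 : (N:ℕ)-N = 0 := by omega
      rw [e, e2, e3, h1]
    have hTj : ∀ j ∈ Finset.range N,
        (C (((N+1).factorial * a.choose (N+1-(j+1)) * b.choose (j+1) : ℕ) : ℝ)
          * X^(b-(j+1)) * (X+1)^(a-(N+1-(j+1))) : ℝ[X]) =
        C ((N.factorial * a.choose (N-j) * b.choose j * (b-j) : ℕ) : ℝ)
          * X^(b-j-1) * (X+1)^(a-(N-j)) +
        C ((N.factorial * a.choose (N-(j+1)) * b.choose (j+1) * (a-(N-(j+1))) : ℕ) : ℝ)
          * X^(b-(j+1)) * (X+1)^(a-(N-(j+1))-1) := by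
      intro j hj
      rw [Finset.mem_range] at hj
      obtain ⟨k, hk⟩ : ∃ k, N = j + k + 1 := ⟨N - j - 1, by omega⟩
      subst hk
      have e1 : j + k + 1 + 1 - (j+1) = k + 1 := by omega
      have e2 : j + k + 1 - j = k + 1 := by omega
      have e3 : j + k + 1 - (j+1) = k := by omega
      rw [e1, e2, e3]
      set F := (j+k+1).factorial with hF
      have hcoef : (j + k + 1 + 1).factorial * a.choose (k+1) * b.choose (j+1)
          = F * a.choose (k+1) * b.choose j * (b-j)
            + F * a.choose k * b.choose (j+1) * (a-k) := by
        have h1 := Nat.choose_succ_right_eq b j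
        have h2 := Nat.choose_succ_right_eq a k
        have hfac : (j + k + 1 + 1).factorial = (j+k+2) * F := by
          rw [hF, Nat.factorial_succ]
        rw [hfac]
        calc (j+k+2) * F * a.choose (k+1) * b.choose (j+1)
            = F * a.choose (k+1) * (b.choose (j+1) * (j+1))
              + F * b.choose (j+1) * (a.choose (k+1) * (k+1)) := by ring
          _ = F * a.choose (k+1) * (b.choose j * (b-j))
              + F * b.choose (j+1) * (a.choose k * (a-k)) := by rw [h1, h2]
          _ = F * a.choose (k+1) * b.choose j * (b-j)
              + F * a.choose k * b.choose (j+1) * (a-k) := by ring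
      have eexp : a - (k+1) = a - k - 1 := by omega
      have eexp2 : b - (j+1) = b - j - 1 := by omega
      rw [eexp, eexp2, hcoef]
      simp only [Nat.cast_add, Nat.cast_mul, map_add, map_mul]
      ring
    rw [hT0, hTN, Finset.sum_congr rfl hTj, Finset.sum_add_distrib]
    ring


private lemma iter_deriv_real_rooted (p : ℝ[X]) (hp : p ≠ 0)
    (hcard : p.roots.card = p.natDegree) :
    ∀ N, N ≤ p.natDegree →
      derivative^[N] p ≠ 0 ∧
      (derivative^[N] p).natDegree = p.natDegree - N ∧
      (derivative^[N] p).roots.card = (derivative^[N] p).natDegree := by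
  intro N
  induction N with
  | zero =>
    intro _
    refine ⟨hp, by simp, by simpa using hcard⟩
  | succ N ih =>
    intro hN
    obtain ⟨h0, hdeg, hc⟩ := ih (by omega)
    set q := derivative^[N] p with hq
    have hqd : q.natDegree ≠ 0 := by omega
    have hd0 : derivative q ≠ 0 := by
      intro h
      exact hqd (Polynomial.natDegree_eq_zero_of_derivative_eq_zero h)
    have h1 : q.roots.card ≤ (derivative q).roots.card + 1 :=
      Polynomial.card_roots_le_derivative q
    have h2 : (derivative q).roots.card ≤ (derivative q).natDegree :=
      Polynomial.card_roots' _
    have h3 : (derivative q).natDegree ≤ q.natDegree - 1 :=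
      Polynomial.natDegree_derivative_le q
    rw [Function.iterate_succ_apply', ← hq]
    exact ⟨hd0, by omega, by omega⟩

private lemma base_poly_facts (a b : ℕ) :
    ((X:ℝ[X])^b * (X+1)^a) ≠ 0 ∧
    ((X:ℝ[X])^b * (X+1)^a).natDegree = b + a ∧
    ((X:ℝ[X])^b * (X+1)^a).roots.card = b + a := by
  have hm : ((X:ℝ[X])^b * (X+1)^a).Monic := by
    have h1 : ((X:ℝ[X])+1).Monic := by simpa using monic_X_add_C (1:ℝ)
    exact (monic_X_pow b).mul (h1.pow a)
  have hx : ((X:ℝ[X])+1) = X - C (-1) := by simp [map_neg, sub_neg_eq_add, add_comm]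
  have h1 : ((X:ℝ[X])+1).Monic := by simpa using monic_X_add_C (1:ℝ)
  refine ⟨hm.ne_zero, ?_, ?_⟩
  · rw [natDegree_mul (pow_ne_zero _ X_ne_zero) (pow_ne_zero _ h1.ne_zero),
      natDegree_pow, natDegree_pow, natDegree_X, hx, natDegree_X_sub_C]
    ring
  · rw [roots_mul hm.ne_zero, roots_pow, roots_pow, roots_X, hx, roots_X_sub_C]
    simp




open Polynomial in
/-- The polynomial `Q(t) = ∑_{j=0}^N C(a, N-j) C(b, j) t^j` has all roots real
(it is a Jacobi polynomial in disguise). -/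
theorem binomial_poly_real_rooted (a b N : ℕ) (hNa : N ≤ a) (hNb : N ≤ b) :
    ∀ z : ℂ,
      ((∑ j ∈ Finset.range (N + 1),
          C ((a.choose (N - j) * b.choose j : ℕ) : ℝ) * X ^ j).map
        (algebraMap ℝ ℂ)).IsRoot z → z.im = 0 := by
  intro z hroot
  by_contra him
  obtain ⟨hp0, hpdeg, hpcard⟩ := base_poly_facts a b
  obtain ⟨hf0, hfdeg, hfcard⟩ :=
    iter_deriv_real_rooted ((X:ℝ[X])^b * (X+1)^a) hp0 (by rw [hpdeg, hpcard]) N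
      (by rw [hpdeg]; omega)
  set f := derivative^[N] ((X:ℝ[X])^b * (X+1)^a) with hf
  have hsplit : f.Splits := splits_iff_card_roots.mpr (by rw [hfcard])
  -- the complex point
  have hz1 : z - 1 ≠ 0 := by
    intro h
    apply him
    have : z = 1 := by linear_combination h
    rw [this]; simp
  set w : ℂ := (z - 1)⁻¹ with hw
  have hw0 : w ≠ 0 := inv_ne_zero hz1
  have hwz : w + 1 = w * z := by
    rw [hw]
    field_simp
    ring
  -- evaluate f at w over ℂ
  have hQ : (∑ j ∈ Finset.range (N + 1),
      ((a.choose (N - j) * b.choose j : ℕ) : ℂ) * z ^ j) = 0 := by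
    have := hroot
    simp only [IsRoot, Polynomial.eval_map, Polynomial.eval₂_finset_sum] at this
    simpa [Polynomial.eval₂_mul, Polynomial.eval₂_pow] using this
  have heval : (f.map (algebraMap ℝ ℂ)).eval w = 0 := by
    rw [hf, key_identity a b N hNa hNb, Polynomial.eval_map, Polynomial.eval₂_finset_sum]
    have hterm : ∀ j ∈ Finset.range (N+1),
        Polynomial.eval₂ (algebraMap ℝ ℂ) w
          (C ((N.factorial * a.choose (N-j) * b.choose j : ℕ) : ℝ) * X^(b-j) * (X+1)^(a-(N-j)))
        = ((N.factorial : ℂ) * w^(b-N) * (w+1)^(a-N) * w^N) *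
            (((a.choose (N - j) * b.choose j : ℕ) : ℂ) * z ^ j) := by
      intro j hj
      rw [Finset.mem_range] at hj
      have hjN : j ≤ N := by omega
      have e1 : b - j = (b - N) + (N - j) := by omega
      have e2 : a - (N - j) = (a - N) + j := by omega
      have e3 : (N - j) + j = N := by omega
      simp only [eval₂_mul, eval₂_pow, eval₂_C, eval₂_X, eval₂_add, eval₂_one]
      rw [e1, e2, pow_add, pow_add]
      have e4 : w^(N-j) * w^j = w^N := by rw [← pow_add, e3]
      have e5 : (w+1)^j = w^j * z^j := by rw [hwz, mul_pow]
      push_cast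
      linear_combination ((N.factorial : ℂ) * (a.choose (N-j) : ℂ) * (b.choose j : ℂ)
          * w^(b-N) * w^(N-j) * (w+1)^(a-N)) * e5
        + ((N.factorial : ℂ) * (a.choose (N-j) : ℂ) * (b.choose j : ℂ)
          * w^(b-N) * (w+1)^(a-N) * z^j) * e4
    rw [Finset.sum_congr rfl hterm, ← Finset.mul_sum, hQ, mul_zero]
  -- w is a root of the mapped polynomial, which has only real roots
  have hfm0 : f.map (algebraMap ℝ ℂ) ≠ 0 :=
    (Polynomial.map_ne_zero_iff (algebraMap ℝ ℂ).injective).mpr hf0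
  have hmem : w ∈ (f.map (algebraMap ℝ ℂ)).roots :=
    Polynomial.mem_roots'.mpr ⟨hfm0, heval⟩
  rw [hsplit.roots_map _, Multiset.mem_map] at hmem
  obtain ⟨r, _, hr⟩ := hmem
  -- so w is real, hence z is real: contradiction
  apply him
  have hr0 : r ≠ 0 := by
    intro h; apply hw0; rw [← hr, h]; simp
  have hz : z = ((1 + r⁻¹ : ℝ) : ℂ) := by
    have hwinv : w⁻¹ = z - 1 := by rw [hw, inv_inv]
    have : z = 1 + w⁻¹ := by rw [hwinv]; ring
    rw [this, ← hr]
    push_cast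
    simp
  rw [hz]
  simp
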